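/- Suppose the interaction graph is complete (N_i = V \ {i} for every i, so n_i = n − 1), and p_i(0) ∈ (0,1) for all i ∈ V. Let n^−(0) and n^+(0) denote the numbers of agents with q_i(0) = 0 and q_i(0) = 1, respectively. If n^−(0) > n^+(0), then lim_{k→∞} p_i(k) = 0 for every i ∈ V; conversely, if n^+(0) > n^−(0), then lim_{k→∞} p_i(k) = 1 for every i ∈ V. -/

import Mathlib

open Filter

private lemma step_mem (p c : ℝ) (h0 : 0 < p) (h1 : p < 1) (hc0 : 0 ≤ c) (hc1 : c ≤ 1) :
    0 < p + p * (1 - p) * (c - p) ∧ p + p * (1 - p) * (c - p) < 1 := by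
  constructor
  · nlinarith [mul_pos h0 (show (0:ℝ) < 1 - p by linarith), sq_nonneg (1 - 2*p)]
  · nlinarith [mul_pos h0 (show (0:ℝ) < 1 - p by linarith), sq_nonneg (1 - 2*p),
      mul_nonneg (mul_pos h0 (show (0:ℝ) < 1 - p by linarith)).le hc0]

private lemma step_lt_half (p c : ℝ) (h0 : 0 < p) (hh : p < 1/2) (hc : c ≤ 1/2) :
    p + p * (1 - p) * (c - p) < 1/2 := by
  nlinarith [mul_pos h0 (show (0:ℝ) < 1 - p by linarith),
    mul_nonneg (mul_pos h0 (show (0:ℝ) < 1 - p by linarith)).le (show (0:ℝ) ≤ 1/2 - c by linarith),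
    sq_nonneg (1 - 2*p)]

private lemma step_ge_half (p c : ℝ) (hh : 1/2 ≤ p) (h1 : p ≤ 1) (hc : 1/2 ≤ c) :
    1/2 ≤ p + p * (1 - p) * (c - p) := by
  nlinarith [mul_nonneg (mul_nonneg (by linarith : (0:ℝ) ≤ p) (by linarith : (0:ℝ) ≤ 1 - p)) (by linarith : (0:ℝ) ≤ c - 1/2),
    mul_nonneg (by linarith : (0:ℝ) ≤ p - 1/2) (by nlinarith : (0:ℝ) ≤ 1 - p * (1-p)),
    sq_nonneg (1 - 2*p)]

private lemma step_escape_down (p c d : ℝ) (hh : 1/2 ≤ p) (h1 : p ≤ 1) (hd : 0 < d)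
    (hc : c ≤ 1/2 - d) :
    (1 - p) * (1 + d/2) ≤ 1 - (p + p * (1 - p) * (c - p)) := by
  have h2 : d/2 ≤ p * (p - c) := by nlinarith
  nlinarith [mul_nonneg (by linarith : (0:ℝ) ≤ 1 - p) (by linarith : (0:ℝ) ≤ p * (p - c) - d/2)]

private lemma step_escape_up (p c d : ℝ) (h0 : 0 < p) (hh : p ≤ 1/2) (hd : 0 < d)
    (hc : 1/2 + d ≤ c) :
    p * (1 + d/2) ≤ p + p * (1 - p) * (c - p) := by
  have h2 : d/2 ≤ (1 - p) * (c - p) := by nlinarith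
  nlinarith [mul_nonneg h0.le (by linarith : (0:ℝ) ≤ (1 - p) * (c - p) - d/2)]

private lemma geom_escape (a : ℕ → ℝ) (ε : ℝ) (hε : 0 < ε) (h0 : 0 < a 0)
    (hstep : ∀ k, a k * (1 + ε) ≤ a (k+1)) (hub : ∀ k, a k ≤ 1) : False := by
  have hpow : ∀ k, a 0 * (1+ε)^k ≤ a k := by
    intro k; induction k with
    | zero => simp
    | succ k ih =>
      have h1 : a 0 * (1+ε)^(k+1) = (a 0 * (1+ε)^k) * (1+ε) := by ring
      rw [h1]
      calc (a 0 * (1+ε)^k) * (1+ε) ≤ a k * (1+ε) :=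
            mul_le_mul_of_nonneg_right ih (by linarith)
        _ ≤ a (k+1) := hstep k
  have ht := tendsto_pow_atTop_atTop_of_one_lt (show (1:ℝ) < 1+ε by linarith)
  obtain ⟨k, hk⟩ := (ht.eventually_ge_atTop (1/a 0 + 1)).exists
  have h3 : a 0 * (1/a 0 + 1) ≤ a 0 * (1+ε)^k := mul_le_mul_of_nonneg_left hk h0.le
  have h2 : a 0 * (1/a 0 + 1) = 1 + a 0 := by field_simp
  have := hub k; have := hpow k
  nlinarith

private lemma lim_zero (g : ℕ → ℝ) (h0 : ∀ m, 0 < g m) (h1 : ∀ m, g m < 1)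
    (hrec : ∀ m, g (m + 1) = g m - g m * g m * (1 - g m)) :
    Tendsto g atTop (nhds 0) := by
  have hanti : Antitone g := antitone_nat_of_succ_le fun m => by
    have := h0 m; have := h1 m; rw [hrec]; nlinarith
  have hbd : BddBelow (Set.range g) := ⟨0, by rintro x ⟨m, rfl⟩; exact (h0 m).le⟩
  have hL := tendsto_atTop_ciInf hanti hbd
  set L := ⨅ m, g m with hLdef
  have hL0 : 0 ≤ L := le_ciInf fun m => (h0 m).le
  have hL1 : L < 1 := lt_of_le_of_lt (ciInf_le hbd 0) (h1 0)
  have h2 : Tendsto (fun m => g (m + 1)) atTop (nhds L) :=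
    (tendsto_add_atTop_iff_nat 1).2 hL
  have h3 : Tendsto (fun m => g m - g m * g m * (1 - g m)) atTop
      (nhds (L - L * L * (1 - L))) :=
    hL.sub ((hL.mul hL).mul (tendsto_const_nhds.sub hL))
  have h4 : L = L - L * L * (1 - L) :=
    tendsto_nhds_unique (h2.congr fun m => hrec m) h3
  have hLz : L = 0 := by
    rcases eq_or_lt_of_le hL0 with h | h
    · exact h.symm
    · nlinarith [mul_pos (mul_pos h h) (show (0:ℝ) < 1 - L by linarith)]
  rwa [hLz] at hL

private lemma lim_one (g : ℕ → ℝ) (h0 : ∀ m, 0 < g m) (h1 : ∀ m, g m < 1)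
    (hrec : ∀ m, g (m + 1) = g m + g m * (1 - g m) * (1 - g m)) :
    Tendsto g atTop (nhds 1) := by
  have hmono : Monotone g := monotone_nat_of_le_succ fun m => by
    have h2 := h0 m; have h3 := h1 m; rw [hrec]
    nlinarith [mul_nonneg (mul_nonneg h2.le (by linarith : (0:ℝ) ≤ 1 - g m)) (by linarith : (0:ℝ) ≤ 1 - g m)]
  have hbd : BddAbove (Set.range g) := ⟨1, by rintro x ⟨m, rfl⟩; exact (h1 m).le⟩
  have hL := tendsto_atTop_ciSup hmono hbd
  set L := ⨆ m, g m with hLdef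
  have hL1 : L ≤ 1 := ciSup_le fun m => (h1 m).le
  have hL0 : 0 < L := lt_of_lt_of_le (h0 0) (le_ciSup hbd 0)
  have h2 : Tendsto (fun m => g (m + 1)) atTop (nhds L) :=
    (tendsto_add_atTop_iff_nat 1).2 hL
  have h3 : Tendsto (fun m => g m + g m * (1 - g m) * (1 - g m)) atTop
      (nhds (L + L * (1 - L) * (1 - L))) :=
    hL.add ((hL.mul (tendsto_const_nhds.sub hL)).mul (tendsto_const_nhds.sub hL))
  have h4 : L = L + L * (1 - L) * (1 - L) :=
    tendsto_nhds_unique (h2.congr fun m => hrec m) h3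
  have hLz : L = 1 := by
    rcases eq_or_lt_of_le hL1 with h | h
    · exact h
    · nlinarith [mul_pos hL0 (mul_pos (show (0:ℝ) < 1 - L by linarith) (show (0:ℝ) < 1 - L by linarith))]
  rwa [hLz] at hL
/-- CODA model on the complete graph: if initially strictly more agents have action `0`
than action `1`, all opinions tend to `0`; conversely if strictly more have action `1`,
all opinions tend to `1`. -/
theorem stmt_13
    (n : ℕ) (hn : 2 ≤ n) (N : Fin n → Finset (Fin n))
    (hcomplete : ∀ i, N i = Finset.univ \ {i})
    (p : Fin n → ℕ → ℝ) (q : Fin n → ℕ → ℕ)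
    (hq0 : ∀ i k, (p i k < 1 / 2 ∨ (p i k = 1 / 2 ∧ p i (k - 1) < 1 / 2)) → q i k = 0)
    (hq1 : ∀ i k, ¬(p i k < 1 / 2 ∨ (p i k = 1 / 2 ∧ p i (k - 1) < 1 / 2)) → q i k = 1)
    (hupd : ∀ i k, p i (k + 1) =
      p i k + p i k * (1 - p i k) / (N i).card * ∑ j ∈ N i, ((q j k : ℝ) - p i k))
    (hp0 : ∀ i, p i 0 ∈ Set.Ioo (0 : ℝ) 1) :
    ((Finset.univ.filter fun i : Fin n => q i 0 = 1).card <
        (Finset.univ.filter fun i : Fin n => q i 0 = 0).card →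
      ∀ i, Filter.Tendsto (fun k => p i k) Filter.atTop (nhds 0)) ∧
    ((Finset.univ.filter fun i : Fin n => q i 0 = 0).card <
        (Finset.univ.filter fun i : Fin n => q i 0 = 1).card →
      ∀ i, Filter.Tendsto (fun k => p i k) Filter.atTop (nhds 1)) := by
  have hnR : (2:ℝ) ≤ (n:ℝ) := by exact_mod_cast hn
  have hnpos : (0:ℝ) < (n:ℝ) - 1 := by linarith
  have hcardR : ∀ i : Fin n, ((N i).card : ℝ) = (n : ℝ) - 1 := by
    intro i
    rw [hcomplete i, Finset.card_sdiff_of_subset (by simp), Finset.card_univ, Finset.card_singleton,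
      Fintype.card_fin]
    push_cast [Nat.cast_sub (show 1 ≤ n by omega)]
    ring
  have hq01 : ∀ i k, q i k = 0 ∨ q i k = 1 := by
    intro i k
    by_cases h : (p i k < 1/2 ∨ (p i k = 1/2 ∧ p i (k-1) < 1/2))
    · exact Or.inl (hq0 i k h)
    · exact Or.inr (hq1 i k h)
  set Q : ℕ → ℝ := fun k => ∑ j : Fin n, (q j k : ℝ) with hQ
  have hQsplit : ∀ (i : Fin n) (k : ℕ),
      ∑ j ∈ Finset.univ \ {i}, (q j k : ℝ) = Q k - q i k := by
    intro i k
    rw [Finset.sum_sdiff_eq_sub (by simp)]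
    simp [hQ]
  have hupd' : ∀ i k, p i (k+1) =
      p i k + p i k * (1 - p i k) * ((Q k - q i k)/((n:ℝ)-1) - p i k) := by
    intro i k
    rw [hupd i k, hcardR i, hcomplete i]
    have hsum : ∑ j ∈ Finset.univ \ {i}, ((q j k : ℝ) - p i k)
        = (Q k - q i k) - ((n:ℝ)-1) * p i k := by
      rw [Finset.sum_sub_distrib, hQsplit i k, Finset.sum_const]
      rw [Finset.card_sdiff_of_subset (by simp), Finset.card_univ, Finset.card_singleton,
        Fintype.card_fin, nsmul_eq_mul, Nat.cast_sub (show 1 ≤ n by omega)]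
      push_cast
      ring
    rw [hsum]
    field_simp
  have hq_nonneg : ∀ (j : Fin n) k, (0:ℝ) ≤ (q j k : ℝ) := fun j k => Nat.cast_nonneg _
  have hq_le_one : ∀ (j : Fin n) k, (q j k : ℝ) ≤ 1 := by
    intro j k; rcases hq01 j k with h | h <;> simp [h]
  have hQsub_nonneg : ∀ (i : Fin n) k, 0 ≤ Q k - q i k := by
    intro i k
    rw [← hQsplit i k]
    exact Finset.sum_nonneg fun j _ => hq_nonneg j k
  have hQsub_le : ∀ (i : Fin n) k, Q k - q i k ≤ (n:ℝ) - 1 := by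
    intro i k
    rw [← hQsplit i k]
    calc ∑ j ∈ Finset.univ \ {i}, (q j k : ℝ) ≤ ∑ j ∈ Finset.univ \ {i}, (1:ℝ) :=
          Finset.sum_le_sum fun j _ => hq_le_one j k
      _ = (n:ℝ) - 1 := by
          rw [Finset.sum_const, Finset.card_sdiff_of_subset (by simp), Finset.card_univ,
            Finset.card_singleton, Fintype.card_fin, nsmul_eq_mul, Nat.cast_sub (show 1 ≤ n by omega)]
          push_cast
          ring
  have hp : ∀ k (i : Fin n), 0 < p i k ∧ p i k < 1 := by
    intro k
    induction k with
    | zero => exact fun i => ⟨(hp0 i).1, (hp0 i).2⟩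
    | succ k ih =>
      intro i
      obtain ⟨h0, h1⟩ := ih i
      rw [hupd' i k]
      have hc0 : 0 ≤ (Q k - q i k)/((n:ℝ)-1) := div_nonneg (hQsub_nonneg i k) hnpos.le
      have hc1 : (Q k - q i k)/((n:ℝ)-1) ≤ 1 := by
        rw [div_le_one hnpos]; exact hQsub_le i k
      exact step_mem _ _ h0 h1 hc0 hc1
  classical
  constructor
  -- ===================== Majority 0 =====================
  · intro hlt i
    have hq0iff : ∀ j : Fin n, q j 0 = 0 ↔ p j 0 < 1/2 := by
      intro j
      constructor
      · intro h
        by_contra hcon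
        have hne : ¬(p j 0 < 1/2 ∨ (p j 0 = 1/2 ∧ p j (0-1) < 1/2)) := by
          push_neg
          exact ⟨le_of_not_gt hcon, fun _ => le_of_not_gt hcon⟩
        have := hq1 j 0 hne
        omega
      · intro h; exact hq0 j 0 (Or.inl h)
    have hiff : ∀ j : Fin n, (¬ p j 0 < 1/2) ↔ q j 0 = 1 := by
      intro j
      rw [← hq0iff j]
      rcases hq01 j 0 with h | h <;> simp [h]
    have hfilt : (Finset.univ.filter fun j : Fin n => ¬ q j 0 = 0)
        = (Finset.univ.filter fun j : Fin n => q j 0 = 1) := by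
      apply Finset.filter_congr
      intro j _
      rcases hq01 j 0 with h | h <;> simp [h]
    have hcards : (Finset.univ.filter fun j : Fin n => q j 0 = 0).card
        + (Finset.univ.filter fun j : Fin n => q j 0 = 1).card = n := by
      have h2 := Finset.card_filter_add_card_filter_not
        (s := (Finset.univ : Finset (Fin n))) (p := fun j => q j 0 = 0)
      rw [hfilt] at h2
      simpa using h2
    have hm1 : 2 * (Finset.univ.filter fun j : Fin n => q j 0 = 1).card + 1 ≤ n := by omega
    have hm1R : ((Finset.univ.filter fun j : Fin n => q j 0 = 1).card : ℝ) ≤ ((n:ℝ)-1)/2 := by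
      have : (2 * (Finset.univ.filter fun j : Fin n => q j 0 = 1).card + 1 : ℝ) ≤ (n:ℝ) := by
        exact_mod_cast hm1
      push_cast at this ⊢
      linarith
    have hQbnd : ∀ k, (∀ j : Fin n, p j 0 < 1/2 → p j k < 1/2) → Q k ≤ ((n:ℝ)-1)/2 := by
      intro k hk
      have hsplit := Finset.sum_filter_add_sum_filter_not (Finset.univ : Finset (Fin n))
        (fun j => p j 0 < 1/2) (fun j => (q j k : ℝ))
      have hz : ∑ j ∈ Finset.univ.filter (fun j : Fin n => p j 0 < 1/2), (q j k : ℝ) = 0 := by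
        apply Finset.sum_eq_zero
        intro j hj
        rw [Finset.mem_filter] at hj
        have := hq0 j k (Or.inl (hk j hj.2))
        simp [this]
      have hcardeq : (Finset.univ.filter fun j : Fin n => ¬ p j 0 < 1/2)
          = (Finset.univ.filter fun j : Fin n => q j 0 = 1) :=
        Finset.filter_congr fun j _ => hiff j
      have hbound : ∑ j ∈ Finset.univ.filter (fun j : Fin n => ¬ p j 0 < 1/2), (q j k : ℝ)
          ≤ ((Finset.univ.filter fun j : Fin n => q j 0 = 1).card : ℝ) := by
        rw [hcardeq]
        calc ∑ j ∈ Finset.univ.filter (fun j : Fin n => q j 0 = 1), (q j k : ℝ)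
            ≤ ∑ _j ∈ Finset.univ.filter (fun j : Fin n => q j 0 = 1), (1:ℝ) :=
              Finset.sum_le_sum fun j _ => hq_le_one j k
          _ = _ := by simp
      have hQeq : Q k = ∑ j ∈ Finset.univ.filter (fun j : Fin n => p j 0 < 1/2), (q j k : ℝ)
          + ∑ j ∈ Finset.univ.filter (fun j : Fin n => ¬ p j 0 < 1/2), (q j k : ℝ) := by
        rw [hQ]; exact hsplit.symm
      rw [hQeq, hz]
      linarith
    have hkey : ∀ k (j : Fin n), p j 0 < 1/2 → p j k < 1/2 := by
      intro k
      induction k with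
      | zero => exact fun j h => h
      | succ k ih =>
        intro j hj
        have hQk := hQbnd k ih
        rw [hupd' j k]
        apply step_lt_half _ _ (hp k j).1 (ih j hj)
        rw [div_le_iff₀ hnpos]
        have := hq_nonneg j k
        linarith
    have hQall : ∀ k, Q k ≤ ((n:ℝ)-1)/2 := fun k => hQbnd k (fun j => hkey k j)
    have pstep : ∀ k (j : Fin n), p j k < 1/2 → p j (k+1) < 1/2 := by
      intro k j hj
      rw [hupd' j k]
      apply step_lt_half _ _ (hp k j).1 hj
      rw [div_le_iff₀ hnpos]
      have := hq_nonneg j k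
      have := hQall k
      linarith
    have hesc : ∀ j : Fin n, ∃ k, p j k < 1/2 := by
      intro j
      by_contra hcon
      push_neg at hcon
      have hq1all : ∀ k, q j k = 1 := by
        intro k
        apply hq1
        push_neg
        refine ⟨hcon k, fun _ => ?_⟩
        cases k with
        | zero => exact hcon 0
        | succ m => exact hcon m
      refine geom_escape (fun k => 1 - p j k) (1/((n:ℝ)-1)/2) (by positivity)
        (by show (0:ℝ) < 1 - p j 0; linarith [(hp 0 j).2]) (fun k => ?_)
        (fun k => by show 1 - p j k ≤ 1; linarith [(hp k j).1])
      show (1 - p j k) * (1 + 1/((n:ℝ)-1)/2) ≤ 1 - p j (k + 1)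
      have hc : (Q k - q j k)/((n:ℝ)-1) ≤ 1/2 - 1/((n:ℝ)-1) := by
        rw [div_le_iff₀ hnpos, hq1all k]
        have h5 : (1/2 - 1/((n:ℝ)-1)) * ((n:ℝ)-1) = ((n:ℝ)-1)/2 - 1 := by
          field_simp
        rw [h5]
        have := hQall k
        push_cast
        linarith
      have hstep := step_escape_down (p j k) _ (1/((n:ℝ)-1)) (hcon k) (hp k j).2.le
        (by positivity) hc
      rw [hupd' j k]
      exact hstep
    have hpersist : ∀ (j : Fin n) k0, p j k0 < 1/2 → ∀ m, p j (k0 + m) < 1/2 := by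
      intro j k0 h m
      induction m with
      | zero => simpa using h
      | succ m ih => exact pstep (k0 + m) j ih
    have hev : ∀ j : Fin n, ∀ᶠ k in Filter.atTop, p j k < 1/2 := by
      intro j
      obtain ⟨k0, hk0⟩ := hesc j
      rw [eventually_atTop]
      refine ⟨k0, fun k hk => ?_⟩
      obtain ⟨m, rfl⟩ := Nat.exists_eq_add_of_le hk
      exact hpersist j k0 hk0 m
    obtain ⟨K, hK⟩ := eventually_atTop.1 (eventually_all.2 hev)
    have hq0K : ∀ k, K ≤ k → ∀ j : Fin n, q j k = 0 := fun k hk j =>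
      hq0 j k (Or.inl (hK k hk j))
    have hQK : ∀ k, K ≤ k → Q k = 0 := by
      intro k hk
      rw [hQ]
      apply Finset.sum_eq_zero
      intro j _
      simp [hq0K k hk j]
    have hg : Tendsto (fun m => p i (m + K)) atTop (nhds 0) := by
      apply lim_zero _ (fun m => (hp (m+K) i).1) (fun m => (hp (m+K) i).2)
      intro m
      have h1 := hupd' i (m + K)
      rw [hQK (m+K) (Nat.le_add_left K m), hq0K (m+K) (Nat.le_add_left K m) i] at h1
      have h2 : m + 1 + K = m + K + 1 := by omega
      rw [h2, h1]
      push_cast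
      ring
    exact (tendsto_add_atTop_iff_nat K).1 hg
  -- ===================== Majority 1 =====================
  · intro hlt i
    have hq1iff : ∀ j : Fin n, q j 0 = 1 ↔ ¬ p j 0 < 1/2 := by
      intro j
      constructor
      · intro h hcon
        have := hq0 j 0 (Or.inl hcon)
        omega
      · intro h
        apply hq1
        push_neg
        exact ⟨le_of_not_gt h, fun _ => le_of_not_gt h⟩
    have hfilt : (Finset.univ.filter fun j : Fin n => ¬ q j 0 = 0)
        = (Finset.univ.filter fun j : Fin n => q j 0 = 1) := by
      apply Finset.filter_congr
      intro j _
      rcases hq01 j 0 with h | h <;> simp [h]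
    have hcards : (Finset.univ.filter fun j : Fin n => q j 0 = 0).card
        + (Finset.univ.filter fun j : Fin n => q j 0 = 1).card = n := by
      have h2 := Finset.card_filter_add_card_filter_not
        (s := (Finset.univ : Finset (Fin n))) (p := fun j => q j 0 = 0)
      rw [hfilt] at h2
      simpa using h2
    have hm1 : n + 1 ≤ 2 * (Finset.univ.filter fun j : Fin n => q j 0 = 1).card := by omega
    have hm1R : ((n:ℝ)+1)/2 ≤ ((Finset.univ.filter fun j : Fin n => q j 0 = 1).card : ℝ) := by
      have : ((n:ℝ)+1) ≤ (2 * (Finset.univ.filter fun j : Fin n => q j 0 = 1).card : ℝ) := by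
        exact_mod_cast hm1
      push_cast at this ⊢
      linarith
    have hQgen : ∀ k, (∀ j : Fin n, q j 0 = 1 → q j k = 1) →
        ((Finset.univ.filter fun j : Fin n => q j 0 = 1).card : ℝ) ≤ Q k := by
      intro k hk
      rw [hQ]
      calc ((Finset.univ.filter fun j : Fin n => q j 0 = 1).card : ℝ)
          = ∑ _j ∈ Finset.univ.filter (fun j : Fin n => q j 0 = 1), (1:ℝ) := by simp
        _ = ∑ j ∈ Finset.univ.filter (fun j : Fin n => q j 0 = 1), (q j k : ℝ) := by
            apply Finset.sum_congr rfl
            intro j hj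
            rw [hk j (Finset.mem_filter.1 hj).2]
            norm_num
        _ ≤ ∑ j : Fin n, (q j k : ℝ) :=
            Finset.sum_le_sum_of_subset_of_nonneg (Finset.filter_subset _ _)
              (fun j _ _ => hq_nonneg j k)
    have hkey : ∀ k (j : Fin n), q j 0 = 1 → (1/2 ≤ p j k ∧ q j k = 1) := by
      intro k
      induction k with
      | zero => exact fun j hj => ⟨not_lt.1 ((hq1iff j).1 hj), hj⟩
      | succ k ih =>
        have hQk : ((n:ℝ)+1)/2 ≤ Q k := le_trans hm1R (hQgen k (fun j hj => (ih j hj).2))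
        intro j hj
        obtain ⟨hpk, hqk⟩ := ih j hj
        have hc : 1/2 ≤ (Q k - q j k)/((n:ℝ)-1) := by
          rw [le_div_iff₀ hnpos, hqk]
          push_cast
          linarith
        have hge : 1/2 ≤ p j (k+1) := by
          rw [hupd' j k]
          exact step_ge_half _ _ hpk (hp k j).2.le hc
        refine ⟨hge, hq1 j (k+1) ?_⟩
        push_neg
        exact ⟨hge, fun _ => hpk⟩
    have hQlow : ∀ k, ((n:ℝ)+1)/2 ≤ Q k := fun k =>
      le_trans hm1R (hQgen k (fun j hj => (hkey k j hj).2))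
    have hperm : ∀ k (j : Fin n), q j k = 1 → q j (k+1) = 1 := by
      intro k j hqk
      have hpk : 1/2 ≤ p j k := by
        by_contra hcon
        push_neg at hcon
        have := hq0 j k (Or.inl hcon)
        omega
      have hc : 1/2 ≤ (Q k - q j k)/((n:ℝ)-1) := by
        rw [le_div_iff₀ hnpos, hqk]
        have := hQlow k
        push_cast
        linarith
      have hge : 1/2 ≤ p j (k+1) := by
        rw [hupd' j k]
        exact step_ge_half _ _ hpk (hp k j).2.le hc
      apply hq1
      push_neg
      exact ⟨hge, fun _ => hpk⟩
    have hesc : ∀ j : Fin n, ∃ k, q j k = 1 := by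
      intro j
      by_contra hcon
      push_neg at hcon
      have hq0all : ∀ k, q j k = 0 := by
        intro k
        rcases hq01 j k with h | h
        · exact h
        · exact absurd h (hcon k)
      have hple : ∀ k, p j k ≤ 1/2 := by
        intro k
        by_contra hcon2
        push_neg at hcon2
        have h3 : q j k = 1 := by
          apply hq1
          push_neg
          exact ⟨hcon2.le, fun he => absurd he (ne_of_gt hcon2)⟩
        have h4 := hq0all k
        omega
      refine geom_escape (fun k => p j k) (1/((n:ℝ)-1)/2) (by positivity)
        (hp 0 j).1 (fun k => ?_) (fun k => (hp k j).2.le)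
      show p j k * (1 + 1/((n:ℝ)-1)/2) ≤ p j (k + 1)
      have hc : 1/2 + 1/((n:ℝ)-1) ≤ (Q k - q j k)/((n:ℝ)-1) := by
        rw [le_div_iff₀ hnpos, hq0all k]
        have h5 : (1/2 + 1/((n:ℝ)-1)) * ((n:ℝ)-1) = ((n:ℝ)+1)/2 + (((n:ℝ)-1)/2 - ((n:ℝ)-1)/2) := by
          field_simp
          ring
        have := hQlow k
        push_cast
        nlinarith [hQlow k]
      have hstep := step_escape_up (p j k) _ (1/((n:ℝ)-1)) (hp k j).1 (hple k)
        (by positivity) hc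
      rw [hupd' j k]
      exact hstep
    have hev : ∀ j : Fin n, ∀ᶠ k in Filter.atTop, q j k = 1 := by
      intro j
      obtain ⟨k0, hk0⟩ := hesc j
      rw [eventually_atTop]
      refine ⟨k0, fun k hk => ?_⟩
      obtain ⟨m, rfl⟩ := Nat.exists_eq_add_of_le hk
      clear hk
      induction m with
      | zero => simpa using hk0
      | succ m ih => exact hperm (k0 + m) j ih
    obtain ⟨K, hK⟩ := eventually_atTop.1 (eventually_all.2 hev)
    have hQK : ∀ k, K ≤ k → Q k = n := by
      intro k hk
      show (∑ j : Fin n, (q j k : ℝ)) = n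
      have hone : ∀ j : Fin n, (q j k : ℝ) = 1 := fun j => by rw [hK k hk j]; norm_num
      calc ∑ j : Fin n, (q j k : ℝ) = ∑ _j : Fin n, (1:ℝ) :=
            Finset.sum_congr rfl (fun j _ => hone j)
        _ = n := by simp
    have hg : Tendsto (fun m => p i (m + K)) atTop (nhds 1) := by
      apply lim_one _ (fun m => (hp (m+K) i).1) (fun m => (hp (m+K) i).2)
      intro m
      have h1 := hupd' i (m + K)
      rw [hQK (m+K) (Nat.le_add_left K m), hK (m+K) (Nat.le_add_left K m) i] at h1
      have h2 : m + 1 + K = m + K + 1 := by omega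
      rw [h2, h1]
      have h3 : ((n:ℝ) - ((1:ℕ):ℝ))/((n:ℝ)-1) = 1 := by
        push_cast
        field_simp
      rw [h3]
    exact (tendsto_add_atTop_iff_nat K).1 hg
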